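/- Let G = G(d,e,k) be a group of squarefree order n, with generators σ of order e and τ of order d satisfying τστ⁻¹ = σ^k. Let z = gcd(e, k−1) and g = e/z. Then the centre Z(G) is the cyclic subgroup ⟨σ^g⟩ of order z, and the commutator subgroup G' is the cyclic subgroup ⟨σ^z⟩ of order g. -/

import Mathlib

open scoped commutatorElement

lemma aux_conj {G : Type} [Group G] (σ τ : G) (k : ℕ) (hrel : τ * σ * τ⁻¹ = σ ^ k) :
    ∀ (m : ℕ) (n : ℤ), τ ^ m * σ ^ n * (τ ^ m)⁻¹ = σ ^ (n * (k : ℤ) ^ m) := by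
  have key : ∀ j : ℤ, τ * σ ^ j * τ⁻¹ = σ ^ ((k : ℤ) * j) := by
    intro j
    rw [← conj_zpow, hrel, ← zpow_natCast σ k, ← zpow_mul]
  intro m
  induction m with
  | zero => intro n; simp
  | succ m ih =>
    intro n
    calc τ ^ (m + 1) * σ ^ n * (τ ^ (m + 1))⁻¹
        = τ * (τ ^ m * σ ^ n * (τ ^ m)⁻¹) * τ⁻¹ := by
          rw [pow_succ' τ m]; group
      _ = τ * σ ^ (n * (k : ℤ) ^ m) * τ⁻¹ := by rw [ih]
      _ = σ ^ ((k : ℤ) * (n * (k : ℤ) ^ m)) := key _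
      _ = σ ^ (n * (k : ℤ) ^ (m + 1)) := by congr 1; ring

/-- **Proposition (centre and commutator subgroup of `G(d,e,k)`).** Let
`G = G(d,e,k)` be of squarefree order `n = d·e`, realised via generators `σ, τ` with
`orderOf σ = e`, `orderOf τ = d`, `τστ⁻¹ = σ^k`. With `z = gcd(e, k-1)` and `g = e/z`,
the centre of `G` is the cyclic subgroup `⟨σ^g⟩`, of order `z`, and the commutator
subgroup of `G` is the cyclic subgroup `⟨σ^z⟩`, of order `g`. -/
theorem centre_and_commutator (d e k : ℕ) (hd : 0 < d) (he : 0 < e) (hk : 0 < k)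
    (hcop : Nat.Coprime d e) (hord : orderOf (k : ZMod e) = d)
    (hsf : Squarefree (d * e))
    (G : Type) [Group G] (σ τ : G)
    (hσ : orderOf σ = e) (hτ : orderOf τ = d)
    (hrel : τ * σ * τ⁻¹ = σ ^ k) (hgen : Subgroup.closure {σ, τ} = ⊤)
    (z g : ℕ) (hz : z = Nat.gcd e (k - 1)) (hg : g = e / z) :
    Subgroup.center G = Subgroup.zpowers (σ ^ g) ∧
      Nat.card (Subgroup.center G) = z ∧
      commutator G = Subgroup.zpowers (σ ^ z) ∧
      Nat.card (commutator G) = g := by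
  have hτd : τ ^ d = 1 := by rw [← hτ]; exact pow_orderOf_eq_one τ
  have hτinv : τ⁻¹ = τ ^ (d - 1) := by
    have h1 : τ ^ (d - 1) * τ = 1 := by
      rw [← pow_succ, Nat.sub_add_cancel hd, hτd]
    exact (eq_inv_of_mul_eq_one_left h1).symm
  have hconj := aux_conj σ τ k hrel
  have hconjinv : ∀ n : ℤ, τ⁻¹ * σ ^ n * τ = σ ^ (n * (k : ℤ) ^ (d - 1)) := by
    intro n
    have h2 := hconj (d - 1) n
    rw [← hτinv, inv_inv] at h2
    exact h2
  -- zpowers σ is normal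
  have hHnormal : (Subgroup.zpowers σ).Normal := by
    rw [← Subgroup.normalizer_eq_top_iff, ← top_le_iff, ← hgen, Subgroup.closure_le]
    rintro x (rfl | rfl)
    · exact Subgroup.le_normalizer (Subgroup.mem_zpowers x)
    · rw [SetLike.mem_coe, Subgroup.mem_normalizer_iff]
      intro h
      constructor
      · rintro ⟨n, rfl⟩
        refine ⟨n * (k : ℤ), ?_⟩
        have := hconj 1 n
        simpa using this.symm
      · rintro ⟨n, hn⟩
        have hn' : σ ^ n = x * h * x⁻¹ := hn
        have hh : h = x⁻¹ * σ ^ n * x := by rw [hn']; group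
        rw [hh, hconjinv n]
        exact ⟨_, rfl⟩
  -- normal form
  have hform : ∀ y : G, ∃ a b : ℕ, y = σ ^ a * τ ^ b := by
    intro y
    have hy : y ∈ Subgroup.zpowers σ ⊔ Subgroup.zpowers τ := by
      have hle : Subgroup.closure {σ, τ} ≤ Subgroup.zpowers σ ⊔ Subgroup.zpowers τ := by
        rw [Subgroup.closure_le]
        rintro x (rfl | rfl)
        · exact Subgroup.mem_sup_left (Subgroup.mem_zpowers x)
        · exact Subgroup.mem_sup_right (Subgroup.mem_zpowers x)
      exact hle (hgen ▸ Subgroup.mem_top y)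
    rw [← SetLike.mem_coe, Subgroup.normal_mul] at hy
    obtain ⟨h, hh, t, ht, rfl⟩ := hy
    obtain ⟨n, rfl⟩ := hh
    obtain ⟨m, rfl⟩ := ht
    have toNat : ∀ (x : G), 0 < orderOf x → ∀ n : ℤ, ∃ a : ℕ, x ^ n = x ^ a := by
      intro x hx n
      refine ⟨(n % (orderOf x : ℤ)).toNat, ?_⟩
      rw [← zpow_natCast, Int.toNat_of_nonneg (Int.emod_nonneg n (by exact_mod_cast hx.ne')),
        zpow_mod_orderOf]
    obtain ⟨a, ha⟩ := toNat σ (hσ ▸ he) n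
    obtain ⟨b, hb⟩ := toNat τ (hτ ▸ hd) m
    exact ⟨a, b, by show σ ^ n * τ ^ m = σ ^ a * τ ^ b; rw [ha, hb]⟩
  -- nat-exponent commutation
  have hcomm_nat : ∀ a b : ℕ, τ ^ b * σ ^ a = σ ^ (a * k ^ b) * τ ^ b := by
    intro a b
    have h1 := hconj b (a : ℤ)
    have h2 : τ ^ b * σ ^ (a : ℤ) = σ ^ ((a : ℤ) * (k : ℤ) ^ b) * τ ^ b := by
      rw [← h1]; group
    have h3 : ((a : ℤ)) * (k : ℤ) ^ b = ((a * k ^ b : ℕ) : ℤ) := by push_cast; ring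
    rw [h3, zpow_natCast, zpow_natCast] at h2
    exact h2
  -- pow equality tests
  have hpow_iff : ∀ a b : ℕ, σ ^ a = σ ^ b ↔ a ≡ b [MOD e] := by
    intro a b; rw [← hσ]; exact pow_eq_pow_iff_modEq
  -- arithmetic on z, g
  have hzpos : 0 < z := by rw [hz]; exact Nat.gcd_pos_of_pos_left _ he
  have hzdvde : z ∣ e := by rw [hz]; exact Nat.gcd_dvd_left _ _
  have hzdvdk : z ∣ k - 1 := by rw [hz]; exact Nat.gcd_dvd_right _ _
  have hegz : e = g * z := by rw [hg, Nat.div_mul_cancel hzdvde]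
  have hgpos : 0 < g := by
    rw [hg]; exact Nat.div_pos (Nat.le_of_dvd he hzdvde) hzpos
  have hcop' : Nat.Coprime g ((k - 1) / z) := by
    rw [hg, hz]
    exact Nat.coprime_div_gcd_div_gcd (hz ▸ hzpos)
  have harith : ∀ a : ℕ, e ∣ a * (k - 1) ↔ g ∣ a := by
    intro a
    rw [hegz]
    constructor
    · intro h
      have h2 : g * z ∣ a * ((k - 1) / z * z) := by rwa [Nat.div_mul_cancel hzdvdk]
      rw [← mul_assoc] at h2
      have h3 : g ∣ a * ((k - 1) / z) := (Nat.mul_dvd_mul_iff_right hzpos).mp h2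
      exact hcop'.dvd_of_dvd_mul_right h3
    · rintro ⟨c, rfl⟩
      have hw : z * ((k - 1) / z) = k - 1 := Nat.mul_div_cancel' hzdvdk
      refine ⟨c * ((k - 1) / z), ?_⟩
      conv_lhs => rw [← hw]
      ring
  -- σ^(g*k) = σ^g
  have hgk : σ ^ (g * k) = σ ^ g := by
    rw [hpow_iff]
    have hdvd : e ∣ g * k - g := by
      have h4 : g * k - g = g * (k - 1) := by
        rw [Nat.mul_sub, mul_one]
      rw [h4]; exact (harith g).mpr dvd_rfl
    exact ((Nat.modEq_iff_dvd' (Nat.le_mul_of_pos_right g hk)).mpr hdvd).symm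
  -- σ^g is central
  have hcenter_ge : σ ^ g ∈ Subgroup.center G := by
    rw [Subgroup.mem_center_iff]
    intro y
    have hle : Subgroup.closure {σ, τ} ≤ Subgroup.centralizer {σ ^ g} := by
      rw [Subgroup.closure_le]
      rintro x (rfl | rfl)
      · rw [SetLike.mem_coe, Subgroup.mem_centralizer_iff]
        rintro h rfl
        exact pow_mul_comm' x g
      · rw [SetLike.mem_coe, Subgroup.mem_centralizer_iff]
        rintro h rfl
        have h9 : x * σ ^ g = σ ^ (g * k) * x := by simpa using hcomm_nat g 1
        rw [hgk] at h9
        exact h9.symm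
    have hy : y ∈ Subgroup.centralizer {σ ^ g} := hle (hgen ▸ Subgroup.mem_top y)
    exact ((Subgroup.mem_centralizer_iff.mp hy) _ rfl).symm
  -- center ≤ zpowers (σ^g)
  have hcenter_le : Subgroup.center G ≤ Subgroup.zpowers (σ ^ g) := by
    intro x hx
    obtain ⟨a, b, rfl⟩ := hform x
    have hxb : τ ^ b = 1 := by
      have h1 : σ * (σ ^ a * τ ^ b) = (σ ^ a * τ ^ b) * σ :=
        Subgroup.mem_center_iff.mp hx σ
      have hb1 : τ ^ b * σ = σ ^ (k ^ b) * τ ^ b := by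
        have h0 := hcomm_nat 1 b
        rwa [pow_one, one_mul] at h0
      have h2 : σ * (σ ^ a * τ ^ b) = σ ^ (a + k ^ b) * τ ^ b := by
        rw [h1, mul_assoc, hb1, ← mul_assoc, ← pow_add]
      have h2' : σ * (σ ^ a * τ ^ b) = σ ^ (a + 1) * τ ^ b := by
        rw [← mul_assoc, ← pow_succ']
      have h3 : σ ^ (a + 1) = σ ^ (a + k ^ b) := mul_right_cancel (h2'.symm.trans h2)
      have h4 : a + 1 ≡ a + k ^ b [MOD e] := (hpow_iff _ _).mp h3
      have h5 : k ^ b ≡ 1 [MOD e] := (Nat.ModEq.add_left_cancel' a h4).symm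
      have h6 : ((k : ZMod e)) ^ b = 1 := by
        have := (ZMod.natCast_eq_natCast_iff _ _ _).mpr h5
        push_cast at this
        exact this
      have h7 : d ∣ b := hord ▸ orderOf_dvd_of_pow_eq_one h6
      exact orderOf_dvd_iff_pow_eq_one.mp (by rw [hτ]; exact h7)
    rw [hxb, mul_one] at hx ⊢
    have h1 : τ * σ ^ a = σ ^ a * τ := Subgroup.mem_center_iff.mp hx τ
    have h2 := hcomm_nat a 1
    rw [pow_one, pow_one] at h2
    have h3 : σ ^ (a * k) = σ ^ a := mul_right_cancel (h2.symm.trans h1)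
    have h4 : e ∣ a * k - a := (Nat.modEq_iff_dvd' (Nat.le_mul_of_pos_right a hk)).mp
      ((hpow_iff _ _).mp h3).symm
    have h5 : g ∣ a := (harith a).mp (by rw [Nat.mul_sub, mul_one]; exact h4)
    obtain ⟨c, rfl⟩ := h5
    exact ⟨(c : ℤ), by show (σ ^ g) ^ (c : ℤ) = σ ^ (g * c); rw [zpow_natCast, ← pow_mul]⟩
  have hcenter : Subgroup.center G = Subgroup.zpowers (σ ^ g) :=
    le_antisymm hcenter_le (Subgroup.zpowers_le.mpr hcenter_ge)
  -- N = zpowers (σ^z)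
  have hzn : ∀ n : ℤ, (σ ^ z) ^ n = σ ^ ((z : ℤ) * n) := by
    intro n; rw [← zpow_natCast σ z, ← zpow_mul]
  have hcommN : ∀ n : ℤ, σ * (σ ^ z) ^ n * σ⁻¹ = (σ ^ z) ^ n := by
    intro n
    have hc : Commute σ ((σ ^ z) ^ n) := ((Commute.refl σ).pow_right z).zpow_right n
    calc σ * (σ ^ z) ^ n * σ⁻¹ = (σ ^ z) ^ n * σ * σ⁻¹ := by rw [hc.eq]
      _ = (σ ^ z) ^ n := by group
  have hcommN' : ∀ n : ℤ, σ⁻¹ * (σ ^ z) ^ n * σ = (σ ^ z) ^ n := by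
    intro n
    have hc : Commute σ⁻¹ ((σ ^ z) ^ n) :=
      (((Commute.refl σ).pow_right z).zpow_right n).inv_left
    calc σ⁻¹ * (σ ^ z) ^ n * σ = (σ ^ z) ^ n * σ⁻¹ * σ := by rw [hc.eq]
      _ = (σ ^ z) ^ n := by group
  have hNnormal : (Subgroup.zpowers (σ ^ z)).Normal := by
    have hσmem : σ ∈ Subgroup.normalizer (Subgroup.zpowers (σ ^ z)) := by
      rw [Subgroup.mem_normalizer_iff]
      intro h
      constructor
      · rintro ⟨n, hn⟩
        have hn' : (σ ^ z) ^ n = h := hn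
        rw [← hn', hcommN n]
        exact ⟨n, rfl⟩
      · rintro ⟨n, hn⟩
        have hn' : (σ ^ z) ^ n = σ * h * σ⁻¹ := hn
        have h2 : h = σ⁻¹ * (σ ^ z) ^ n * σ := by rw [hn']; group
        rw [h2, hcommN' n]
        exact ⟨n, rfl⟩
    have hτmem : τ ∈ Subgroup.normalizer (Subgroup.zpowers (σ ^ z)) := by
      rw [Subgroup.mem_normalizer_iff]
      intro h
      have hconj1 : ∀ m : ℤ, τ * σ ^ m * τ⁻¹ = σ ^ (m * (k : ℤ)) := by
        intro m; have := hconj 1 m; simpa using this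
      constructor
      · rintro ⟨n, hn⟩
        have hn' : (σ ^ z) ^ n = h := hn
        have h1 : τ * h * τ⁻¹ = σ ^ ((z : ℤ) * n * (k : ℤ)) := by
          rw [← hn', hzn n, hconj1]
        refine ⟨n * (k : ℤ), ?_⟩
        show (σ ^ z) ^ (n * (k : ℤ)) = τ * h * τ⁻¹
        rw [hzn, h1]; congr 1; ring
      · rintro ⟨n, hn⟩
        have hn' : (σ ^ z) ^ n = τ * h * τ⁻¹ := hn
        have h2 : h = τ⁻¹ * (σ ^ z) ^ n * τ := by rw [hn']; group
        rw [h2, hzn n, hconjinv]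
        refine ⟨n * (k : ℤ) ^ (d - 1), ?_⟩
        show (σ ^ z) ^ (n * (k : ℤ) ^ (d - 1)) = σ ^ ((z : ℤ) * n * (k : ℤ) ^ (d - 1))
        rw [hzn]; congr 1; ring
    rw [← Subgroup.normalizer_eq_top_iff, ← top_le_iff, ← hgen, Subgroup.closure_le]
    rintro x (rfl | rfl)
    exacts [hσmem, hτmem]
  -- σ^(k-1) ∈ N
  have hk1N : σ ^ (k - 1) ∈ Subgroup.zpowers (σ ^ z) := by
    obtain ⟨c, hc⟩ := hzdvdk
    refine ⟨(c : ℤ), ?_⟩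
    show (σ ^ z) ^ (c : ℤ) = σ ^ (k - 1)
    rw [zpow_natCast, ← pow_mul, ← hc]
  -- quotient is abelian
  have hπgen : Subgroup.closure
      {QuotientGroup.mk' (Subgroup.zpowers (σ ^ z)) σ,
       QuotientGroup.mk' (Subgroup.zpowers (σ ^ z)) τ} = ⊤ := by
    have h1 := MonoidHom.map_closure (QuotientGroup.mk' (Subgroup.zpowers (σ ^ z))) {σ, τ}
    rw [Set.image_pair] at h1
    rw [← h1, hgen, ← MonoidHom.range_eq_map]
    exact MonoidHom.range_eq_top_of_surjective _ (QuotientGroup.mk'_surjective _)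
  have hcommστ : (QuotientGroup.mk' (Subgroup.zpowers (σ ^ z)) τ) *
      (QuotientGroup.mk' (Subgroup.zpowers (σ ^ z)) σ)
      = (QuotientGroup.mk' (Subgroup.zpowers (σ ^ z)) σ) *
        (QuotientGroup.mk' (Subgroup.zpowers (σ ^ z)) τ) := by
    have h2 : τ * σ = σ ^ k * τ := by simpa using hcomm_nat 1 1
    have h1 : τ * σ = σ ^ (k - 1) * (σ * τ) := by
      rw [h2, ← mul_assoc, ← pow_succ, Nat.sub_add_cancel hk]
    have h3 : (QuotientGroup.mk' (Subgroup.zpowers (σ ^ z))) (σ ^ (k - 1)) = 1 := by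
      rw [← MonoidHom.mem_ker, QuotientGroup.ker_mk']
      exact hk1N
    calc QuotientGroup.mk' (Subgroup.zpowers (σ ^ z)) τ *
          QuotientGroup.mk' (Subgroup.zpowers (σ ^ z)) σ
        = QuotientGroup.mk' (Subgroup.zpowers (σ ^ z)) (τ * σ) := (map_mul _ _ _).symm
      _ = QuotientGroup.mk' (Subgroup.zpowers (σ ^ z)) (σ ^ (k - 1)) *
          QuotientGroup.mk' (Subgroup.zpowers (σ ^ z)) (σ * τ) := by rw [h1, map_mul]
      _ = _ := by rw [h3, one_mul, map_mul]
  have hQcomm : ∀ a b : G ⧸ Subgroup.zpowers (σ ^ z), a * b = b * a := by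
    set S : Set (G ⧸ Subgroup.zpowers (σ ^ z)) :=
      {QuotientGroup.mk' (Subgroup.zpowers (σ ^ z)) σ,
       QuotientGroup.mk' (Subgroup.zpowers (σ ^ z)) τ} with hS
    have hle : Subgroup.closure S ≤ Subgroup.centralizer S := by
      rw [Subgroup.closure_le]
      have hm1 : QuotientGroup.mk' (Subgroup.zpowers (σ ^ z)) σ
          ∈ Subgroup.centralizer S := by
        rw [Subgroup.mem_centralizer_iff]
        rintro y (rfl | rfl)
        · rfl
        · exact hcommστ
      have hm2 : QuotientGroup.mk' (Subgroup.zpowers (σ ^ z)) τ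
          ∈ Subgroup.centralizer S := by
        rw [Subgroup.mem_centralizer_iff]
        rintro y (rfl | rfl)
        · exact hcommστ.symm
        · rfl
      rintro x (rfl | rfl)
      exacts [hm1, hm2]
    have hcent : ∀ s ∈ S, s ∈ Subgroup.center (G ⧸ Subgroup.zpowers (σ ^ z)) := by
      intro s hs
      rw [Subgroup.mem_center_iff]
      intro q
      have hq : q ∈ Subgroup.centralizer S := hle (hπgen ▸ Subgroup.mem_top q)
      exact (Subgroup.mem_centralizer_iff.mp hq s hs).symm
    have htop : (⊤ : Subgroup (G ⧸ Subgroup.zpowers (σ ^ z)))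
        ≤ Subgroup.center (G ⧸ Subgroup.zpowers (σ ^ z)) := by
      rw [← hπgen, Subgroup.closure_le]
      intro s hs
      exact hcent s hs
    intro a b
    exact (Subgroup.mem_center_iff.mp (htop (Subgroup.mem_top a)) b).symm
  have hcomm_le : commutator G ≤ Subgroup.zpowers (σ ^ z) := by
    rw [commutator_def, Subgroup.commutator_le]
    intro p _ q _
    have h1 : (QuotientGroup.mk' (Subgroup.zpowers (σ ^ z))) ⁅p, q⁆ = 1 := by
      rw [map_commutatorElement, commutatorElement_eq_one_iff_mul_comm]
      exact hQcomm _ _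
    rwa [← MonoidHom.mem_ker, QuotientGroup.ker_mk'] at h1
  -- σ^z ∈ commutator G
  have hcommel : ⁅τ, σ⁆ = σ ^ (k - 1) := by
    have h0 : ⁅τ, σ⁆ = τ * σ * τ⁻¹ * σ⁻¹ := rfl
    rw [h0, hrel]
    have h5 : σ ^ k = σ ^ (k - 1) * σ := by rw [← pow_succ, Nat.sub_add_cancel hk]
    rw [h5, mul_assoc]
    simp
  have hk1comm : σ ^ (k - 1) ∈ commutator G :=
    hcommel ▸ Subgroup.commutator_mem_commutator (Subgroup.mem_top τ) (Subgroup.mem_top σ)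
  have hσz_comm : σ ^ z ∈ commutator G := by
    have hb := Nat.gcd_eq_gcd_ab e (k - 1)
    have hσe : σ ^ ((e : ℕ) : ℤ) = 1 := by
      rw [zpow_natCast, ← hσ, pow_orderOf_eq_one]
    have h1 : σ ^ ((z : ℕ) : ℤ) = (σ ^ (k - 1)) ^ Nat.gcdB e (k - 1) := by
      calc σ ^ ((z : ℕ) : ℤ)
          = σ ^ ((e : ℤ) * Nat.gcdA e (k - 1) + ((k - 1 : ℕ) : ℤ) * Nat.gcdB e (k - 1)) := by
            congr 1; rw [hz]; exact_mod_cast hb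
        _ = (σ ^ ((e : ℕ) : ℤ)) ^ Nat.gcdA e (k - 1) *
            (σ ^ (((k - 1) : ℕ) : ℤ)) ^ Nat.gcdB e (k - 1) := by
            rw [zpow_add, zpow_mul, zpow_mul]
        _ = (σ ^ (k - 1)) ^ Nat.gcdB e (k - 1) := by
            rw [hσe, one_zpow, one_mul, zpow_natCast]
    have h2 : σ ^ z = (σ ^ (k - 1)) ^ Nat.gcdB e (k - 1) := by
      rw [← zpow_natCast σ z]; exact h1
    rw [h2]
    exact Subgroup.zpow_mem _ hk1comm _
  have hcommutator : commutator G = Subgroup.zpowers (σ ^ z) :=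
    le_antisymm hcomm_le (Subgroup.zpowers_le.mpr hσz_comm)
  -- cardinalities
  have hgdvde : g ∣ e := ⟨z, hegz⟩
  have hcard_center : Nat.card (Subgroup.center G) = z := by
    rw [hcenter, Nat.card_zpowers, orderOf_pow' σ hgpos.ne', hσ,
      Nat.gcd_eq_right hgdvde, hegz, Nat.mul_div_cancel_left z hgpos]
  have hcard_comm : Nat.card (commutator G) = g := by
    rw [hcommutator, Nat.card_zpowers, orderOf_pow' σ hzpos.ne', hσ,
      Nat.gcd_eq_right hzdvde, ← hg]
  exact ⟨hcenter, hcard_center, hcommutator, hcard_comm⟩
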